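/- If m' is an index at which |a_{m'}| = max_{0 ≤ m ≤ n} |a_m| and max_{0 ≤ m ≤ n} |a_m| > 0, then m' · |a_{m'}| ≤ max_{0 ≤ m ≤ n−1} Σ_{k=1}^n |a_{m∖k}|; in particular m' · max_k |ω_k| ≤ κ_A, where κ_A = (max_k |ω_k| / max_m |a_m|) · max_{0 ≤ m ≤ n−1} Σ_{k=1}^n |a_{m∖k}| is the condition of problem A. -/

import Mathlib

open Polynomial Finset

/-- if `|a_{m'}| = max_m |a_m| > 0`, then
`m'·|a_{m'}| ≤ max_{0 ≤ m ≤ n−1} Σ_k |a_{m∖k}|`, and consequently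
`m' · max_k |ω_k| ≤ κ_A = (max_k |ω_k| / max_m |a_m|) · max_{0 ≤ m ≤ n−1} Σ_k |a_{m∖k}|`. -/
theorem condition_lower_bound (n : ℕ) (hn : 1 ≤ n) (ω : Fin n → ℂ)
    (P : Polynomial ℂ) (hP : P = ∏ j, (Polynomial.X - Polynomial.C (ω j)))
    (m' : ℕ) (hm'n : m' ≤ n)
    (hmax : ∀ m ≤ n, Norm.norm (P.coeff m) ≤ Norm.norm (P.coeff m'))
    (hpos : 0 < Norm.norm (P.coeff m')) :
    (m' : ℝ) * Norm.norm (P.coeff m') ≤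
      (Finset.range n).sup' (Finset.nonempty_range_iff.mpr (by omega)) (fun m =>
        ∑ k, Norm.norm
          ((∏ j ∈ Finset.univ.erase k, (Polynomial.X - Polynomial.C (ω j))).coeff m)) ∧
    (m' : ℝ) *
        (Finset.univ.sup' ⟨⟨0, hn⟩, Finset.mem_univ _⟩ fun k => Norm.norm (ω k)) ≤
      ((Finset.univ.sup' ⟨⟨0, hn⟩, Finset.mem_univ _⟩ fun k => Norm.norm (ω k)) /
          Norm.norm (P.coeff m')) *
        (Finset.range n).sup' (Finset.nonempty_range_iff.mpr (by omega)) (fun m =>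
          ∑ k, Norm.norm
            ((∏ j ∈ Finset.univ.erase k, (Polynomial.X - Polynomial.C (ω j))).coeff m)) := by
  have hderiv : Polynomial.derivative P =
      ∑ k, ∏ j ∈ Finset.univ.erase k, (Polynomial.X - Polynomial.C (ω j)) := by
    rw [hP, Finset.prod_eq_multiset_prod, Polynomial.derivative_prod,
      Finset.sum_eq_multiset_sum]
    refine congr_arg _ (Multiset.map_congr rfl fun k hk => ?_)
    simp [Finset.prod_eq_multiset_prod, Finset.erase_val]
  have hmain : (m' : ℝ) * Norm.norm (P.coeff m') ≤
      (Finset.range n).sup' (Finset.nonempty_range_iff.mpr (by omega)) (fun m =>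
        ∑ k, Norm.norm
          ((∏ j ∈ Finset.univ.erase k, (Polynomial.X - Polynomial.C (ω j))).coeff m)) := by
    rcases Nat.eq_zero_or_pos m' with h0 | h1
    · have hS0 : (0:ℝ) ≤
          (Finset.range n).sup' (Finset.nonempty_range_iff.mpr (by omega)) (fun m =>
            ∑ k, Norm.norm
              ((∏ j ∈ Finset.univ.erase k, (Polynomial.X - Polynomial.C (ω j))).coeff m)) := by
        refine le_trans ?_ (Finset.le_sup' _ (Finset.mem_range.mpr (by omega : 0 < n)))
        exact Finset.sum_nonneg fun k _ => norm_nonneg _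
      simpa [h0] using hS0
    · obtain ⟨mm, rfl⟩ : ∃ mm, m' = mm + 1 := ⟨m' - 1, by omega⟩
      have hmem : mm ∈ Finset.range n := Finset.mem_range.mpr (by omega)
      have hc : (Polynomial.derivative P).coeff mm
          = P.coeff (mm + 1) * ((mm + 1 : ℕ) : ℂ) := by
        rw [Polynomial.coeff_derivative]
        push_cast
        ring_nf
      have h2 : ((mm + 1 : ℕ) : ℝ) * Norm.norm (P.coeff (mm + 1))
          = Norm.norm ((Polynomial.derivative P).coeff mm) := by
        rw [hc, norm_mul, Complex.norm_natCast, mul_comm]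
      rw [h2]
      calc Norm.norm ((Polynomial.derivative P).coeff mm)
          ≤ ∑ k, Norm.norm
            ((∏ j ∈ Finset.univ.erase k, (Polynomial.X - Polynomial.C (ω j))).coeff mm) := by
            rw [hderiv, Polynomial.finset_sum_coeff]
            exact norm_sum_le _ _
        _ ≤ _ := by apply Finset.le_sup' _ hmem
  refine ⟨hmain, ?_⟩
  have hM0 : (0:ℝ) ≤
      (Finset.univ.sup' ⟨⟨0, hn⟩, Finset.mem_univ _⟩ fun k => Norm.norm (ω k)) :=
    le_trans (norm_nonneg (ω ⟨0, hn⟩)) (by apply Finset.le_sup' (fun k => Norm.norm (ω k)) (Finset.mem_univ (⟨0, hn⟩ : Fin n)))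
  have key : (m' : ℝ) *
      (Finset.univ.sup' ⟨⟨0, hn⟩, Finset.mem_univ _⟩ fun k => Norm.norm (ω k)) =
      ((Finset.univ.sup' ⟨⟨0, hn⟩, Finset.mem_univ _⟩ fun k => Norm.norm (ω k)) /
        Norm.norm (P.coeff m')) * ((m' : ℝ) * Norm.norm (P.coeff m')) := by
    field_simp
  rw [key]
  exact mul_le_mul_of_nonneg_left hmain (div_nonneg hM0 (norm_nonneg _))
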